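/- Let B and P be d×d integer matrices with det B = ±1 and det P ≠ 0, and let A = P B P⁻¹, a d×d rational matrix (P⁻¹ taken over ℚ). Then there exists an integer n with 1 ≤ n ≤ (det P)^(2d²) such that every entry of A^n is an integer. -/

import Mathlib

/-- The exponent semigroup of a square rational matrix: the set of natural
numbers `n` such that every entry of `A ^ n` is an integer. -/
def expSemigroup {ι : Type*} [Fintype ι] [DecidableEq ι]
    (A : Matrix ι ι ℚ) : Set ℕ :=
  {n | ∀ i j, ∃ z : ℤ, (A ^ n) i j = (z : ℚ)}

theorem stmt_12 {d : ℕ} (B P : Matrix (Fin d) (Fin d) ℤ)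
    (hB : B.det = 1 ∨ B.det = -1) (hP : P.det ≠ 0)
    (A : Matrix (Fin d) (Fin d) ℚ)
    (hA : A = P.map (Int.cast : ℤ → ℚ) * B.map (Int.cast : ℤ → ℚ) *
      (P.map (Int.cast : ℤ → ℚ))⁻¹) :
    ∃ n : ℕ, 1 ≤ n ∧ (n : ℤ) ≤ P.det ^ (2 * d ^ 2) ∧ n ∈ expSemigroup A := by
  set m : ℕ := (P.det ^ 2).toNat with hmdef
  have hmz : (m : ℤ) = P.det ^ 2 := Int.toNat_of_nonneg (sq_nonneg _)
  have hm0 : 0 < m := by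
    have : (0:ℤ) < P.det ^ 2 := by positivity
    omega
  haveI : NeZero m := ⟨hm0.ne'⟩
  set M : ℕ := m ^ (d ^ 2) with hMdef
  -- pigeonhole on powers of B mod m
  set Bb : Matrix (Fin d) (Fin d) (ZMod m) :=
    (Int.castRingHom (ZMod m)).mapMatrix B with hBb
  have hcard : Fintype.card (Matrix (Fin d) (Fin d) (ZMod m)) = M := by
    simp [Matrix, hMdef, pow_mul, sq]
    exact Fintype.card_eq_nat_card.trans (by simp [Nat.card_fun])
  obtain ⟨a, b, hab, hfab⟩ :
      ∃ a b : Fin (M + 1), a ≠ b ∧ Bb ^ (a : ℕ) = Bb ^ (b : ℕ) := by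
    apply Fintype.exists_ne_map_eq_of_card_lt (fun k : Fin (M+1) => Bb ^ (k : ℕ))
    simp [hcard]
  -- wlog a < b
  wlog hlt : (a : ℕ) < (b : ℕ) generalizing a b
  · exact this b a hab.symm hfab.symm (by
      rcases (Fin.val_ne_of_ne hab).lt_or_gt with h | h
      · exact absurd h hlt
      · exact h)
  set n : ℕ := (b : ℕ) - (a : ℕ) with hn
  have hn1 : 1 ≤ n := by omega
  have hBbU : IsUnit Bb := by
    rw [Matrix.isUnit_iff_isUnit_det]
    have : Bb.det = ((B.det : ℤ) : ZMod m) := by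
      rw [hBb, ← RingHom.map_det]; rfl
    rcases hB with h | h <;> simp [this, h]
  have hBbn : Bb ^ n = 1 := by
    have h1 : Bb ^ (a : ℕ) * Bb ^ n = Bb ^ (a : ℕ) * 1 := by
      rw [mul_one, ← pow_add, hn]
      rw [hfab]
      congr 1
      omega
    exact (hBbU.pow (a : ℕ)).mul_left_cancel h1
  have hmap1 : (Int.castRingHom (ZMod m)).mapMatrix (B ^ n) = 1 := by
    rw [map_pow]; exact hBbn
  -- entrywise divisibility
  have hdvd : ∀ i j, (m : ℤ) ∣ (B ^ n - 1) i j := by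
    intro i j
    rw [← ZMod.intCast_zmod_eq_zero_iff_dvd]
    have h1 := congrFun (congrFun hmap1 i) j
    simp only [RingHom.mapMatrix_apply, Matrix.map_apply, Int.coe_castRingHom] at h1
    by_cases h : i = j <;>
      simp only [Matrix.sub_apply, Matrix.one_apply, h, if_true, if_false,
        Int.cast_sub] at h1 ⊢ <;>
      simp [h1]
  set C : Matrix (Fin d) (Fin d) ℤ := Matrix.of fun i j => (B ^ n - 1) i j / (m : ℤ)
    with hC
  have hBn : B ^ n = 1 + (m : ℤ) • C := by
    ext i j
    simp only [Matrix.add_apply, Matrix.smul_apply, hC, Matrix.of_apply, smul_eq_mul]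
    rw [Int.mul_ediv_cancel' (hdvd i j)]
    simp [Matrix.sub_apply]
  -- the rational side
  set Q : Matrix (Fin d) (Fin d) ℚ := P.map (Int.cast : ℤ → ℚ) with hQ
  have hQdet : Q.det = (P.det : ℚ) := by
    rw [hQ]
    rw [show P.map (Int.cast : ℤ → ℚ) = (Int.castRingHom ℚ).mapMatrix P from rfl,
      ← RingHom.map_det]; rfl
  have hQdetne : Q.det ≠ 0 := by
    rw [hQdet]; exact_mod_cast hP
  have hQU : IsUnit Q.det := isUnit_iff_ne_zero.mpr hQdetne
  have hQinv : Q * Q⁻¹ = 1 := Matrix.mul_nonsing_inv Q hQU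
  have hQinv' : Q⁻¹ * Q = 1 := Matrix.nonsing_inv_mul Q hQU
  have hApow : ∀ k : ℕ, A ^ k = Q * (B ^ k).map (Int.cast : ℤ → ℚ) * Q⁻¹ := by
    intro k
    induction k with
    | zero => simp [hQinv]
    | succ k ih =>
      rw [pow_succ, ih, hA]
      have hmap : (B ^ (k+1)).map (Int.cast : ℤ → ℚ)
          = (B ^ k).map (Int.cast : ℤ → ℚ) * B.map (Int.cast : ℤ → ℚ) := by
        rw [pow_succ]
        exact map_mul ((Int.castRingHom ℚ).mapMatrix) (B ^ k) B
      rw [hmap]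
      calc Q * (B ^ k).map (Int.cast : ℤ → ℚ) * Q⁻¹ * (Q * B.map (Int.cast : ℤ → ℚ) * Q⁻¹)
          = Q * (B ^ k).map (Int.cast : ℤ → ℚ) * (Q⁻¹ * Q)
              * B.map (Int.cast : ℤ → ℚ) * Q⁻¹ := by noncomm_ring
        _ = Q * ((B ^ k).map (Int.cast : ℤ → ℚ) * B.map (Int.cast : ℤ → ℚ)) * Q⁻¹ := by
              rw [hQinv']; noncomm_ring
  have hmapsum2 : ∀ (c : ℤ) (Z : Matrix (Fin d) (Fin d) ℤ),
      ((1 : Matrix (Fin d) (Fin d) ℤ) + c • Z).map (Int.cast : ℤ → ℚ)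
        = 1 + (c : ℚ) • Z.map (Int.cast : ℤ → ℚ) := by
    intro c Z
    ext i j
    by_cases h : i = j <;>
      simp only [Matrix.map_apply, Matrix.add_apply, Matrix.smul_apply, Matrix.one_apply,
        h, if_true, if_false, smul_eq_mul] <;> push_cast <;> ring
  have hmul : (P * C * P.adjugate).map (Int.cast : ℤ → ℚ)
      = Q * C.map (Int.cast : ℤ → ℚ) * Q.adjugate := by
    have hadj : (P.adjugate).map (Int.cast : ℤ → ℚ) = Q.adjugate := by
      rw [hQ]
      exact (Int.castRingHom ℚ).map_adjugate P
    rw [show ∀ X : Matrix (Fin d) (Fin d) ℤ,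
        X.map (Int.cast : ℤ → ℚ) = (Int.castRingHom ℚ).mapMatrix X from fun _ => rfl,
      map_mul, map_mul]
    rw [← hadj]; rfl
  -- final integrality
  have hkey : A ^ n = ((1 : Matrix (Fin d) (Fin d) ℤ)
      + P.det • (P * C * P.adjugate)).map (Int.cast : ℤ → ℚ) := by
    rw [hApow n, hBn, hmapsum2, hmapsum2, mul_add, add_mul, mul_one, hQinv]
    congr 1
    rw [Matrix.mul_smul, Matrix.smul_mul, Matrix.inv_def, Ring.inverse_eq_inv',
      Matrix.mul_smul, smul_smul, hQdet, hmul]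
    congr 1
    have hmq : ((m : ℤ) : ℚ) = (P.det : ℚ) ^ 2 := by exact_mod_cast hmz
    have hne : (P.det : ℚ) ≠ 0 := by exact_mod_cast hP
    rw [hmq, sq, mul_inv_cancel_right₀ hne]
  refine ⟨n, hn1, ?_, ?_⟩
  · have h1 : n ≤ M := by omega
    have h2 : (M : ℤ) = P.det ^ (2 * d ^ 2) := by
      rw [hMdef]
      push_cast
      rw [hmz, ← pow_mul, mul_comm]
    rw [← h2]
    exact_mod_cast h1
  · intro i j
    exact ⟨((1 : Matrix (Fin d) (Fin d) ℤ) + P.det • (P * C * P.adjugate)) i j,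
      by rw [hkey]; rfl⟩
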